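/- Let a^{(1)}, …, a^{(N)} ∈ ℝⁿ, let d ∈ ℝⁿ be a unit vector with ⟨a^{(j)}, d⟩ = 0 for every j, and let S(θ) = 1/(1 + e^{−θ}). Let X : [0,∞) → ℝⁿ be continuous and let z : [0,∞) → ℝⁿ be differentiable with z'(t) = (1/2) Σ_{j=1}^N a^{(j)} [ S(⟨a^{(j)}, z(t) + X(t)⟩) − S(⟨a^{(j)}, X(t)⟩) ] for all t ≥ 0. Then: (a) ⟨d, z(t)⟩ is constant in t; (b) t ↦ ‖z(t) − ⟨d, z(t)⟩ d‖ is nondecreasing; consequently (c) t ↦ ‖z(t)‖ is nondecreasing, and if |⟨d, z(0)⟩| ≤ c ‖z(0)‖ for some c ≥ 0 then |⟨d, z(t)⟩| ≤ c ‖z(t)‖ for all t ≥ 0. -/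

import Mathlib

open RealInnerProductSpace

/-- The logistic sigmoid function `S(θ) = 1/(1 + e^{−θ})`. -/
noncomputable def logisticS (θ : ℝ) : ℝ := (1 + Real.exp (-θ))⁻¹

lemma logisticS_mono : Monotone logisticS := by
  intro x y h
  unfold logisticS
  exact inv_anti₀ (by positivity) (add_le_add_right (Real.exp_le_exp.2 (neg_le_neg h)) 1)

/-- The claim at the end of Section 5.1 (Bernoulli-logistic regression model): for the
difference `z(t)` of two forward solutions, the component of `z` along the unit normal `d`
to the span of the inputs is conserved, the norm of its component in the span is
nondecreasing, hence `‖z(t)‖` is nondecreasing and the angle condition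
`|⟨d,z⟩| ≤ c‖z‖` is preserved. -/
theorem stmt19 (n N : ℕ) (a : Fin N → EuclideanSpace ℝ (Fin n))
    (d : EuclideanSpace ℝ (Fin n)) (hd : ‖d‖ = 1)
    (horth : ∀ j, ⟪a j, d⟫ = 0)
    (X : ℝ → EuclideanSpace ℝ (Fin n)) (hX : ContinuousOn X (Set.Ici 0))
    (z : ℝ → EuclideanSpace ℝ (Fin n))
    (hz : ∀ t : ℝ, 0 ≤ t → HasDerivWithinAt z
      ((1 / 2 : ℝ) • ∑ j, (logisticS ⟪a j, z t + X t⟫ - logisticS ⟪a j, X t⟫) • a j)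
      (Set.Ici 0) t) :
    (∀ s t : ℝ, 0 ≤ s → 0 ≤ t → ⟪d, z t⟫ = ⟪d, z s⟫) ∧
    (MonotoneOn (fun t => ‖z t - ⟪d, z t⟫ • d‖) (Set.Ici 0)) ∧
    (MonotoneOn (fun t => ‖z t‖) (Set.Ici 0)) ∧
    (∀ c : ℝ, 0 ≤ c → |⟪d, z 0⟫| ≤ c * ‖z 0‖ →
      ∀ t : ℝ, 0 ≤ t → |⟪d, z t⟫| ≤ c * ‖z t‖) := by
  set β : ℝ → EuclideanSpace ℝ (Fin n) := fun t =>
    (1 / 2 : ℝ) • ∑ j, (logisticS ⟪a j, z t + X t⟫ - logisticS ⟪a j, X t⟫) • a j with hβ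
  have hβd : ∀ t, ⟪β t, d⟫ = 0 := by
    intro t
    rw [hβ]
    simp only [real_inner_smul_left, sum_inner, real_inner_smul_left, horth]
    simp
  have hβz : ∀ t, 0 ≤ ⟪β t, z t⟫ := by
    intro t
    rw [hβ]
    simp only [real_inner_smul_left, sum_inner, real_inner_smul_left]
    apply mul_nonneg (by norm_num)
    apply Finset.sum_nonneg
    intro j _
    have hadd : ⟪a j, z t + X t⟫ = ⟪a j, X t⟫ + ⟪a j, z t⟫ := by
      rw [inner_add_right]; ring
    rcases le_total (⟪a j, z t⟫ : ℝ) 0 with h | h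
    · have h1 : logisticS ⟪a j, z t + X t⟫ - logisticS ⟪a j, X t⟫ ≤ 0 := by
        have := logisticS_mono (show (⟪a j, X t⟫:ℝ) + ⟪a j, z t⟫ ≤ ⟪a j, X t⟫ by linarith)
        rw [hadd]; linarith
      nlinarith
    · have h1 : 0 ≤ logisticS ⟪a j, z t + X t⟫ - logisticS ⟪a j, X t⟫ := by
        have := logisticS_mono (show (⟪a j, X t⟫:ℝ) ≤ ⟪a j, X t⟫ + ⟪a j, z t⟫ by linarith)
        rw [hadd]; linarith
      exact mul_nonneg h1 h
  set g : ℝ → ℝ := fun t => ⟪d, z t⟫ with hgdef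
  have hg : ∀ t ∈ Set.Ici (0:ℝ), HasDerivWithinAt g 0 (Set.Ici 0) t := by
    intro t ht
    have h1 := (hasDerivWithinAt_const t (Set.Ici (0:ℝ)) d).inner ℝ (hz t ht)
    have h0 : (⟪d, β t⟫ : ℝ) + ⟪(0 : EuclideanSpace ℝ (Fin n)), z t⟫ = 0 := by
      rw [inner_zero_left, add_zero, real_inner_comm]
      exact hβd t
    exact h1.congr_deriv h0
  have hip : ∀ x ∈ interior (Set.Ici (0:ℝ)),
      HasDerivWithinAt g ((fun _ => (0:ℝ)) x) (interior (Set.Ici (0:ℝ))) x := by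
    intro x hx
    rw [interior_Ici] at hx ⊢
    exact (hg x (Set.mem_Ici.2 (le_of_lt hx))).mono Set.Ioi_subset_Ici_self
  have hgc : ContinuousOn g (Set.Ici 0) := fun x hx => (hg x hx).continuousWithinAt
  have hgmono : MonotoneOn g (Set.Ici 0) :=
    monotoneOn_of_hasDerivWithinAt_nonneg (convex_Ici 0) hgc hip (fun _ _ => le_refl 0)
  have hganti : AntitoneOn g (Set.Ici 0) := by
    have h2 := monotoneOn_of_hasDerivWithinAt_nonneg (f := fun t => -g t) (f' := fun _ => (0:ℝ))
      (convex_Ici 0) hgc.neg (fun x hx => ((hip x hx).neg).congr_deriv (by norm_num))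
      (fun _ _ => le_refl 0)
    intro x hx y hy hxy
    have := h2 hx hy hxy
    simpa using this
  have hgconst : ∀ s t : ℝ, 0 ≤ s → 0 ≤ t → g t = g s := by
    intro s t hs ht
    rcases le_total s t with h | h
    · exact le_antisymm (hganti hs ht h) (hgmono hs ht h)
    · exact le_antisymm (hgmono ht hs h) (hganti ht hs h)
  set w : ℝ → EuclideanSpace ℝ (Fin n) := fun t => z t - g t • d with hwdef
  have hw : ∀ t ∈ Set.Ici (0:ℝ), HasDerivWithinAt w (β t) (Set.Ici 0) t := by
    intro t ht
    have h2 : HasDerivWithinAt (fun t => g t • d) ((0:ℝ) • d) (Set.Ici 0) t :=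
      (hg t ht).smul_const d
    have h3 := (hz t ht).sub h2
    rw [zero_smul, sub_zero] at h3
    exact h3
  set f : ℝ → ℝ := fun t => ⟪w t, w t⟫ with hfdef
  have hwd : ∀ t, ⟪w t, d⟫ = 0 := by
    intro t
    rw [hwdef]
    simp only [inner_sub_left, real_inner_smul_left]
    rw [real_inner_self_eq_norm_sq, hd, real_inner_comm]
    simp [hgdef]
  have hβw : ∀ t, 0 ≤ ⟪β t, w t⟫ := by
    intro t
    rw [hwdef]
    simp only [inner_sub_right, real_inner_smul_right, hβd t]
    simpa using hβz t
  have hf : ∀ t ∈ Set.Ici (0:ℝ), HasDerivWithinAt f (2 * ⟪β t, w t⟫) (Set.Ici 0) t := by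
    intro t ht
    have h1 := (hw t ht).inner ℝ (hw t ht)
    have e : (⟪w t, β t⟫ : ℝ) + ⟪β t, w t⟫ = 2 * ⟪β t, w t⟫ := by
      rw [real_inner_comm]; ring
    rwa [e] at h1
  have hfmono : MonotoneOn f (Set.Ici 0) := by
    apply monotoneOn_of_hasDerivWithinAt_nonneg (f' := fun t => 2 * ⟪β t, w t⟫) (convex_Ici 0)
      (fun x hx => (hf x hx).continuousWithinAt)
    · intro x hx
      rw [interior_Ici] at hx ⊢
      exact (hf x (Set.mem_Ici.2 (le_of_lt hx))).mono Set.Ioi_subset_Ici_self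
    · intro x _
      exact mul_nonneg (by norm_num) (hβw x)
  have hfsq : ∀ u : ℝ, f u = ‖w u‖ ^ 2 := fun u => real_inner_self_eq_norm_sq (w u)
  have hwm : MonotoneOn (fun t => ‖w t‖) (Set.Ici 0) := by
    intro s hs t ht hst
    have h1 := hfmono hs ht hst
    rw [hfsq s, hfsq t] at h1
    have h2 := norm_nonneg (w s)
    have h3 := norm_nonneg (w t)
    nlinarith
  have pyth : ∀ u : ℝ, ‖z u‖ ^ 2 = f u + (g u) ^ 2 := by
    intro u
    have hzu : z u = w u + g u • d := by rw [hwdef]; simp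
    calc ‖z u‖ ^ 2 = ‖w u + g u • d‖ ^ 2 := by rw [← hzu]
      _ = ‖w u‖ ^ 2 + 2 * ⟪w u, g u • d⟫ + ‖g u • d‖ ^ 2 := norm_add_sq_real _ _
      _ = f u + (g u) ^ 2 := by
          rw [real_inner_smul_right, hwd u, norm_smul, hd, hfsq u]
          simp [sq_abs]
  have hzm : MonotoneOn (fun t => ‖z t‖) (Set.Ici 0) := by
    intro s hs t ht hst
    have h1 := hfmono hs ht hst
    have h2 : g t = g s := hgconst s t hs ht
    have h4 : ‖z s‖ ^ 2 ≤ ‖z t‖ ^ 2 := by rw [pyth s, pyth t, h2]; linarith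
    have h5 := norm_nonneg (z s)
    have h6 := norm_nonneg (z t)
    nlinarith
  refine ⟨hgconst, hwm, hzm, ?_⟩
  intro c hc h0 t ht
  have h1 : g t = g 0 := hgconst 0 t le_rfl ht
  have h2 : ‖z 0‖ ≤ ‖z t‖ := hzm (le_refl (0:ℝ)) ht ht
  calc |(⟪d, z t⟫ : ℝ)| = |(⟪d, z 0⟫ : ℝ)| := by rw [show (⟪d, z t⟫ : ℝ) = ⟪d, z 0⟫ from h1]
    _ ≤ c * ‖z 0‖ := h0
    _ ≤ c * ‖z t‖ := mul_le_mul_of_nonneg_left h2 hc
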